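/- Let (θ, ≤) be a stratifying system of size t in mod R, 0 ≠ M ∈ F(θ), i = min(Supp_θ(M)), and m = [M : θ(i)]. Then there exists an exact sequence 0 → N → M → θ(i)^m → 0 in F(θ) with min(Supp_θ(N)) > i. -/

import Mathlib

open CategoryTheory CategoryTheory.Limits

attribute [local instance] Classical.propDecidable

namespace ITPaper

variable (R : Type) [Ring R]

/-- `f : P ⟶ M` is a projective cover: `P` projective, `f` epi, and the kernel of `f`
is superfluous (any `g` with `g ≫ f` epi is itself epi). -/
def IsProjCover {P M : ModuleCat R} (f : P ⟶ M) : Prop :=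
  Projective P ∧ Epi f ∧ ∀ ⦃Q : ModuleCat R⦄ (g : Q ⟶ P), Epi (g ≫ f) → Epi g

/-- A chosen first syzygy: kernel of a chosen projective cover (if one exists). -/
noncomputable def syz (M : ModuleCat R) : ModuleCat R :=
  if h : ∃ (P : ModuleCat R) (f : P ⟶ M), IsProjCover R f then
    kernel h.choose_spec.choose
  else M

/-- iterated syzygy -/
noncomputable def syzN (n : ℕ) (M : ModuleCat R) : ModuleCat R := (syz R)^[n] M

/-- `pdLE n M` : `M` has a projective resolution of length `≤ n`. -/
def pdLE : ℕ → ModuleCat R → Prop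
  | 0, M => Projective M
  | (n+1), M => ∃ (P : ModuleCat R) (f : P ⟶ M), Projective P ∧ Epi f ∧ pdLE n (kernel f)

/-- projective dimension, with value `⊤` if infinite. -/
noncomputable def pd (M : ModuleCat R) : ℕ∞ :=
  sInf {d : ℕ∞ | ∃ n : ℕ, d = (n : ℕ∞) ∧ pdLE R n M}

/-- projective finitistic dimension of a class of modules. -/
noncomputable def pfd (S : Set (ModuleCat R)) : ℕ∞ :=
  sSup {d : ℕ∞ | d ≠ ⊤ ∧ ∃ C ∈ S, pd R C = d}

/-- indecomposable module -/
def Indec (M : ModuleCat R) : Prop :=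
  ¬ IsZero M ∧ ∀ (A B : ModuleCat R), Nonempty (M ≅ A ⊞ B) → IsZero A ∨ IsZero B

/-- indecomposable non-projective finitely generated modules -/
def IndecNP := {M : ModuleCat R // Indec R M ∧ ¬ Projective M ∧ Module.Finite R M}

instance isoSetoid : Setoid (IndecNP R) where
  r A B := Nonempty (A.1 ≅ B.1)
  iseqv := ⟨fun A => ⟨Iso.refl _⟩, fun ⟨e⟩ => ⟨e.symm⟩, fun ⟨e⟩ ⟨f⟩ => ⟨e.trans f⟩⟩

/-- iso-classes of indecomposable non-projective f.g. modules -/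
def IsoCls := Quotient (isoSetoid R)

/-- the free abelian group `K` on iso-classes of indecomposable non-projective f.g. modules -/
def K := FreeAbelianGroup (IsoCls R)

noncomputable instance : AddCommGroup (K R) := by unfold K; infer_instance

/-- the class `[M]` of a module in `K`: sum of classes of its non-projective
indecomposable summands (via a chosen decomposition). -/
noncomputable def cls (M : ModuleCat R) : K R :=
  if h : ∃ (n : ℕ) (D : Fin n → IndecNP R) (P : ModuleCat R), Projective P ∧
      Nonempty (M ≅ P ⊞ (⨁ fun i => (D i).1)) then
    ∑ i : Fin h.choose, FreeAbelianGroup.of (Quotient.mk (isoSetoid R) (h.choose_spec.choose i))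
  else 0

/-- the syzygy operator on `K` -/
noncomputable def OmegaK : K R →+ K R :=
  FreeAbelianGroup.lift (fun c : IsoCls R => cls R (syz R (Quotient.out c).1))

noncomputable def OmegaPow : ℕ → (K R →+ K R)
  | 0 => AddMonoidHom.id _
  | (n+1) => (OmegaK R).comp (OmegaPow n)

/-- `⟨M⟩`: subgroup of `K` generated by the classes of indecomposable direct summands of `M` -/
noncomputable def gen (M : ModuleCat R) : AddSubgroup (K R) :=
  AddSubgroup.closure {x | ∃ N : IndecNP R,
    (∃ C : ModuleCat R, Nonempty (M ≅ N.1 ⊞ C)) ∧ x = FreeAbelianGroup.of (Quotient.mk (isoSetoid R) N)}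

/-- `Ω^n⟨M⟩` -/
noncomputable def OmegaSub (n : ℕ) (M : ModuleCat R) : AddSubgroup (K R) :=
  (gen R M).map (OmegaPow R n)

/-- the Igusa–Todorov `Φ`: least `n` such that `Ω : Ω^m⟨M⟩ → Ω^{m+1}⟨M⟩` is an
isomorphism for all `m ≥ n`. -/
noncomputable def Phi (M : ModuleCat R) : ℕ :=
  sInf {n : ℕ | ∀ m, n ≤ m → Set.InjOn (⇑(OmegaK R)) ((OmegaSub R m M : AddSubgroup (K R)) : Set (K R))}

/-- the set of direct summands of `Ω^{Φ(M)} M` -/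
noncomputable def CM (M : ModuleCat R) : Set (ModuleCat R) :=
  {C | ∃ D : ModuleCat R, Nonempty (syzN R (Phi R M) M ≅ C ⊞ D)}

/-- the Igusa–Todorov function `Ψ` -/
noncomputable def Psi (M : ModuleCat R) : ℕ∞ := (Phi R M : ℕ∞) + pfd R (CM R M)

/-- `add M` -/
def addCat (M : ModuleCat R) : Set (ModuleCat R) :=
  {X | ∃ (n : ℕ) (C : ModuleCat R), Nonempty ((X ⊞ C) ≅ ⨁ (fun _ : Fin n => M))}


/-- A `θ`-filtration of `M`: a chain `0 = c 0 ≤ ⋯ ≤ c n = M` of submodules whose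
successive quotients are isomorphic to modules `θ (typ i)`. -/
structure Filtration {t : ℕ} (θ : Fin t → ModuleCat R) (M : ModuleCat R) where
  n : ℕ
  c : Fin (n+1) → Submodule R M
  bot : c 0 = ⊥
  top : c (Fin.last n) = ⊤
  mono : ∀ i : Fin n, c i.castSucc ≤ c i.succ
  typ : Fin n → Fin t
  iso : ∀ i : Fin n,
    Nonempty (((c i.succ : Submodule R M) ⧸ ((c i.castSucc).comap (c i.succ).subtype))
      ≃ₗ[R] (θ (typ i)))

/-- `M ∈ F(θ)` -/
def InFilt {t : ℕ} (θ : Fin t → ModuleCat R) (M : ModuleCat R) : Prop :=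
  Nonempty (Filtration R θ M)

/-- the filtration multiplicity `[M : θ i]` (computed from a chosen filtration;
by Erdmann–Sáenz it does not depend on this choice). -/
noncomputable def mult {t : ℕ} (θ : Fin t → ModuleCat R) (M : ModuleCat R) (i : Fin t) : ℕ :=
  if h : Nonempty (Filtration R θ M) then
    (Finset.univ.filter (fun x => h.some.typ x = i)).card
  else 0

/-- the category `F(θ)` inside `mod R` -/
def FCat {t : ℕ} (θ : Fin t → ModuleCat R) : Set (ModuleCat R) :=
  {M | Module.Finite R M ∧ InFilt R θ M}

/-- A stratifying system of size `t`. -/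
structure StratSys (t : ℕ) where
  θ : Fin t → ModuleCat R
  fg : ∀ i, Module.Finite R (θ i)
  indec : ∀ i, Indec R (θ i)
  homZero : ∀ i j : Fin t, i < j → ∀ f : θ j ⟶ θ i, f = 0
  extZero : ∀ i j : Fin t, i ≤ j → ∀ (E : ModuleCat R) (f : θ i ⟶ E) (g : E ⟶ θ j)
    (w : f ≫ g = 0), (ShortComplex.mk f g w).ShortExact → ∃ s : θ j ⟶ E, s ≫ g = 𝟙 (θ j)

/-- `Ψ`-dimension of a class -/
noncomputable def PsiD (S : Set (ModuleCat R)) : ℕ∞ :=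
  sSup {d : ℕ∞ | ∃ M ∈ S, Psi R M = d}

section ESAux


universe u v

variable {R}
variable {t : ℕ} (θ : Fin t → ModuleCat.{v} R)

/-- `Filt θ L A` : `A` has a θ-filtration with type list `L` (head = top layer). -/
def Filt : List (Fin t) → (A : Type v) → [AddCommGroup A] → [Module R A] → Prop
  | [], A, _, _ => Subsingleton A
  | j :: L, A, _, _ => ∃ N : Submodule R A, Filt L N ∧ Nonempty ((A ⧸ N) ≃ₗ[R] θ j)

noncomputable def subquotEquiv {M : Type v} [AddCommGroup M] [Module R M] (p q : Submodule R M) :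
    (q ⧸ (p.comap q.subtype)) ≃ₗ[R] (q.map p.mkQ) := by
  let φ : q →ₗ[R] (q.map p.mkQ) :=
    LinearMap.codRestrict _ (p.mkQ.comp q.subtype) (fun x => Submodule.mem_map_of_mem x.2)
  have hsurj : Function.Surjective φ := by
    rintro ⟨y, x, hx, rfl⟩
    exact ⟨⟨x, hx⟩, rfl⟩
  have hker : LinearMap.ker φ = p.comap q.subtype := by
    ext x
    simp [φ, LinearMap.mem_ker, Subtype.ext_iff, Submodule.Quotient.mk_eq_zero]
  exact (Submodule.quotEquivOfEq _ _ hker.symm).trans (φ.quotKerEquivOfSurjective hsurj)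

noncomputable def doubleComapEquiv {M : Type v} [AddCommGroup M] [Module R M]
    (K p q : Submodule R M) (hpK : p ≤ K) :
    ((p.comap K.subtype) ⧸ ((q.comap K.subtype).comap (p.comap K.subtype).subtype))
      ≃ₗ[R] (p ⧸ q.comap p.subtype) := by
  let ι : (p.comap K.subtype) →ₗ[R] p :=
    LinearMap.codRestrict p (K.subtype.comp (p.comap K.subtype).subtype) (fun x => x.2)
  let Φ := (q.comap p.subtype).mkQ.comp ι
  have hsurj : Function.Surjective Φ := by
    intro y
    obtain ⟨⟨x, hx⟩, rfl⟩ := Submodule.mkQ_surjective _ y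
    exact ⟨⟨⟨x, hpK hx⟩, hx⟩, rfl⟩
  have hker : LinearMap.ker Φ = (q.comap K.subtype).comap (p.comap K.subtype).subtype := by
    ext x
    simp [Φ, ι, LinearMap.mem_ker, Submodule.Quotient.mk_eq_zero]
    exact Iff.rfl
  exact (Submodule.quotEquivOfEq _ _ hker.symm).trans (Φ.quotKerEquivOfSurjective hsurj)

noncomputable def topQuotEquiv {A : Type v} [AddCommGroup A] [Module R A] (K : Submodule R A) :
    ((⊤ : Submodule R A) ⧸ (K.comap (⊤ : Submodule R A).subtype)) ≃ₗ[R] (A ⧸ K) := by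
  let Φ := K.mkQ.comp (⊤ : Submodule R A).subtype
  have hsurj : Function.Surjective Φ := by
    intro y
    obtain ⟨x, rfl⟩ := Submodule.mkQ_surjective _ y
    exact ⟨⟨x, trivial⟩, rfl⟩
  have hker : LinearMap.ker Φ = K.comap (⊤ : Submodule R A).subtype := by
    ext x
    simp [Φ, LinearMap.mem_ker, Submodule.Quotient.mk_eq_zero]
  exact (Submodule.quotEquivOfEq _ _ hker.symm).trans (Φ.quotKerEquivOfSurjective hsurj)

theorem filt_congr : ∀ (L : List (Fin t)) {A B : Type v} [AddCommGroup A] [Module R A]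
    [AddCommGroup B] [Module R B] (e : A ≃ₗ[R] B), Filt θ L A → Filt θ L B
  | [], A, B, _, _, _, _, e, h => by
    haveI : Subsingleton A := h
    exact e.symm.toEquiv.subsingleton
  | j :: L, A, B, _, _, _, _, e, ⟨N, hN, ⟨q⟩⟩ =>
    ⟨N.map (e : A →ₗ[R] B), filt_congr L (e.submoduleMap N) hN,
      ⟨((Submodule.Quotient.equiv N (N.map (e : A →ₗ[R] B)) e rfl).symm.trans q)⟩⟩


theorem filt_homZero {l : Fin t} : ∀ (L : List (Fin t)) {A : Type v} [AddCommGroup A] [Module R A]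
    (_ : ∀ k ∈ L, ∀ ψ : (θ k : Type v) →ₗ[R] (θ l : Type v), ψ = 0)
    (_ : Filt θ L A) (φ : A →ₗ[R] (θ l : Type v)), φ = 0
  | [], A, _, _, h, hF, φ => by
    haveI : Subsingleton A := hF
    ext x
    rw [Subsingleton.elim x 0, map_zero]
    rfl
  | j :: L, A, _, _, h, ⟨N, hN, ⟨e⟩⟩, φ => by
    have h1 : φ.comp N.subtype = 0 :=
      filt_homZero L (fun k hk => h k (List.mem_cons_of_mem _ hk)) hN _
    have hle : N ≤ LinearMap.ker φ := by
      intro x hx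
      simpa using LinearMap.congr_fun h1 ⟨x, hx⟩
    have h2 : (N.liftQ φ hle).comp (e.symm : (θ j : Type v) →ₗ[R] (A ⧸ N)) = 0 :=
      h j (List.mem_cons_self) _
    ext x
    have : φ x = (N.liftQ φ hle) (N.mkQ x) := rfl
    rw [this, ← e.symm_apply_apply (N.mkQ x)]
    simpa using LinearMap.congr_fun h2 (e (N.mkQ x))

noncomputable def kerSndEquiv (A : Type v) [AddCommGroup A] [Module R A]
    (B : Type v) [AddCommGroup B] [Module R B] :
    (LinearMap.ker (LinearMap.snd R A B)) ≃ₗ[R] A where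
  toFun x := (x : A × B).1
  map_add' x y := rfl
  map_smul' r x := rfl
  invFun a := ⟨(a, 0), rfl⟩
  left_inv x := by
    apply Subtype.ext
    refine Prod.ext rfl ?_
    exact (x.2 : (x : A × B).2 = 0).symm
  right_inv a := rfl

theorem filt_prod {L : List (Fin t)} {j : Fin t} {A : Type v} [AddCommGroup A] [Module R A]
    (hF : Filt θ L A) : Filt θ (j :: L) (A × (θ j : Type v)) := by
  refine ⟨LinearMap.ker (LinearMap.snd R A (θ j)), ?_, ?_⟩
  · exact filt_congr θ L (kerSndEquiv A (θ j : Type v)).symm hF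
  · exact ⟨(LinearMap.snd R A (θ j)).quotKerEquivOfSurjective (fun y => ⟨(0, y), rfl⟩)⟩

noncomputable def piSnocEquiv {c : ℕ} {X : Type u} [AddCommGroup X] [Module R X] :
    ((Fin c → X) × X) ≃ₗ[R] (Fin (c + 1) → X) where
  toFun p := Fin.snoc p.1 p.2
  map_add' p q := by
    funext k
    cases k using Fin.lastCases <;> simp [Fin.snoc_castSucc, Fin.snoc_last]
  map_smul' r p := by
    funext k
    cases k using Fin.lastCases <;> simp [Fin.snoc_castSucc, Fin.snoc_last]
  invFun f := (Fin.init f, f (Fin.last c))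
  left_inv p := by
    refine Prod.ext ?_ ?_
    · funext k; simp [Fin.init]
    · simp
  right_inv f := by
    funext k
    cases k using Fin.lastCases <;> simp [Fin.init]

theorem filt_replicate (i : Fin t) : ∀ c : ℕ, Filt θ (List.replicate c i) (Fin c → (θ i : Type v))
  | 0 => ⟨fun a b => funext fun x => x.elim0⟩
  | c + 1 => by
    rw [List.replicate_succ]
    exact filt_congr θ _ piSnocEquiv (filt_prod θ (filt_replicate i c))

noncomputable def subsingletonEquiv (A : Type v) [AddCommGroup A] [Module R A]
    (B : Type u) [AddCommGroup B] [Module R B] [Subsingleton A] [Subsingleton B] :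
    A ≃ₗ[R] B where
  toFun _ := 0
  map_add' _ _ := (Subsingleton.elim _ _)
  map_smul' _ _ := (Subsingleton.elim _ _)
  invFun _ := 0
  left_inv _ := Subsingleton.elim _ _
  right_inv _ := Subsingleton.elim _ _



section Split

variable {X : Type v} [AddCommGroup X] [Module R X]

noncomputable def sectionRetr {B : Type v} [AddCommGroup B] [Module R B]
    (g : B →ₗ[R] X) (s : X →ₗ[R] B) (hs : g.comp s = LinearMap.id) :
    B →ₗ[R] (LinearMap.ker g) :=
  LinearMap.codRestrict _ (LinearMap.id - s.comp g) (fun x => by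
    have h1 : g (s (g x)) = g x := LinearMap.congr_fun hs (g x)
    simp [LinearMap.mem_ker, map_sub, h1])

theorem sectionRetr_surj {B : Type v} [AddCommGroup B] [Module R B]
    (g : B →ₗ[R] X) (s : X →ₗ[R] B) (hs : g.comp s = LinearMap.id) :
    Function.Surjective (sectionRetr g s hs) := by
  rintro ⟨x, hx⟩
  refine ⟨x, Subtype.ext ?_⟩
  have hx0 : g x = 0 := hx
  simp [sectionRetr, hx0]

theorem sectionRetr_ker {B : Type v} [AddCommGroup B] [Module R B]
    (g : B →ₗ[R] X) (s : X →ₗ[R] B) (hs : g.comp s = LinearMap.id) :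
    LinearMap.ker (sectionRetr g s hs) = LinearMap.range s := by
  ext x
  constructor
  · intro h
    have h' : sectionRetr g s hs x = 0 := h
    have h2 : x - s (g x) = 0 := by
      have h3 := Subtype.ext_iff.mp h'
      simpa [sectionRetr] using h3
    exact ⟨g x, (sub_eq_zero.mp h2).symm⟩
  · rintro ⟨y, rfl⟩
    have h1 : g (s y) = y := LinearMap.congr_fun hs y
    apply LinearMap.mem_ker.mpr
    apply Subtype.ext
    simp [sectionRetr, h1]

noncomputable def quotRangeEquivKer {B : Type v} [AddCommGroup B] [Module R B]
    (g : B →ₗ[R] X) (s : X →ₗ[R] B) (hs : g.comp s = LinearMap.id) :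
    (B ⧸ LinearMap.range s) ≃ₗ[R] (LinearMap.ker g) :=
  (Submodule.quotEquivOfEq _ _ (sectionRetr_ker g s hs).symm).trans
    ((sectionRetr g s hs).quotKerEquivOfSurjective (sectionRetr_surj g s hs))

noncomputable def splitEquiv {B : Type v} [AddCommGroup B] [Module R B]
    (g : B →ₗ[R] X) (s : X →ₗ[R] B) (hs : g.comp s = LinearMap.id) :
    B ≃ₗ[R] ((LinearMap.ker g) × X) :=
  { LinearMap.prod (sectionRetr g s hs) g with
    invFun := fun p => (p.1 : B) + s p.2
    left_inv := fun x => by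
      simp [sectionRetr, sub_add_cancel]
    right_inv := fun p => by
      obtain ⟨⟨a, ha⟩, y⟩ := p
      have ha0 : g a = 0 := ha
      have h1 : g (s y) = y := LinearMap.congr_fun hs y
      refine Prod.ext (Subtype.ext ?_) ?_
      · simp [sectionRetr, ha0, h1]
      · simp [ha0, h1] }

end Split

theorem filt_split
    (hext : ∀ i j : Fin t, i ≤ j → ∀ (E : ModuleCat.{v} R) (f : θ i ⟶ E) (g : E ⟶ θ j)
      (w : f ≫ g = 0), (CategoryTheory.ShortComplex.mk f g w).ShortExact →
      ∃ s : θ j ⟶ E, s ≫ g = 𝟙 (θ j)) (j : Fin t) :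
    ∀ (L : List (Fin t)) (_ : ∀ k ∈ L, k ≤ j) (B : Type v) [AddCommGroup B] [Module R B]
      (g : B →ₗ[R] (θ j : Type v)) (_ : Function.Surjective g)
      (_ : Filt θ L (LinearMap.ker g)),
      ∃ s : (θ j : Type v) →ₗ[R] B, g.comp s = LinearMap.id
  | [], hL, B, _, _, g, hg, hker => by
    haveI : Subsingleton (LinearMap.ker g) := hker
    have hinj : Function.Injective g := by
      rw [← LinearMap.ker_eq_bot]
      ext x
      simp only [Submodule.mem_bot, LinearMap.mem_ker]
      constructor
      · intro hx
        exact congrArg Subtype.val (Subsingleton.elim (⟨x, hx⟩ : LinearMap.ker g) 0)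
      · rintro rfl
        exact map_zero g
    let E := LinearEquiv.ofBijective g ⟨hinj, hg⟩
    exact ⟨E.symm, by ext y; exact E.apply_symm_apply y⟩
  | k :: L, hL, B, _, _, g, hg, hker => by
    obtain ⟨N, hN, ⟨e⟩⟩ := hker
    have A : Submodule R B := LinearMap.ker g
    let N' : Submodule R B := N.map (LinearMap.ker g).subtype
    have hN'le : N' ≤ LinearMap.ker g := Submodule.map_subtype_le _ _
    let gbar : (B ⧸ N') →ₗ[R] (θ j : Type v) := N'.liftQ g hN'le
    have hgbar : Function.Surjective gbar := by
      intro y; obtain ⟨x, rfl⟩ := hg y; exact ⟨N'.mkQ x, rfl⟩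
    have hkerbar : LinearMap.ker gbar = (LinearMap.ker g).map N'.mkQ := Submodule.ker_liftQ _ _ _
    have hcm : N'.comap (LinearMap.ker g).subtype = N :=
      Submodule.comap_map_eq_of_injective (LinearMap.ker g).injective_subtype N
    let ε : ((θ k : Type v)) ≃ₗ[R] (LinearMap.ker gbar) :=
      e.symm.trans ((Submodule.quotEquivOfEq _ _ hcm.symm).trans
        ((subquotEquiv N' (LinearMap.ker g)).trans (LinearEquiv.ofEq _ _ hkerbar.symm)))
    let fc : (θ k) ⟶ (ModuleCat.of R (B ⧸ N')) := ModuleCat.ofHom ((LinearMap.ker gbar).subtype.comp ε.toLinearMap)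
    let gc : (ModuleCat.of R (B ⧸ N')) ⟶ (θ j) := ModuleCat.ofHom gbar
    have w : fc ≫ gc = 0 := by
      ext x
      show gbar (ε x : B ⧸ N') = 0
      exact (ε x).2
    have hSE : (CategoryTheory.ShortComplex.mk fc gc w).ShortExact :=
      { exact := by
          rw [CategoryTheory.ShortComplex.moduleCat_exact_iff_range_eq_ker]
          show LinearMap.range ((LinearMap.ker gbar).subtype.comp ε.toLinearMap) = LinearMap.ker gbar
          rw [LinearMap.range_comp, LinearEquiv.range, Submodule.map_top,
            Submodule.range_subtype]
        mono_f := (ModuleCat.mono_iff_injective fc).mpr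
          ((LinearMap.ker gbar).injective_subtype.comp ε.injective)
        epi_g := (ModuleCat.epi_iff_surjective gc).mpr hgbar }
    obtain ⟨sc, hsc⟩ := hext k j (hL k (List.mem_cons_self)) _ fc gc w hSE
    let s1 : (θ j : Type v) →ₗ[R] (B ⧸ N') := sc.hom
    have hs1 : ∀ y, gbar (s1 y) = y := fun y => LinearMap.congr_fun (congrArg ModuleCat.Hom.hom hsc) y
    let B₁ : Submodule R B := (LinearMap.range s1).comap N'.mkQ
    have hN'B₁ : N' ≤ B₁ := by
      intro x hx
      show N'.mkQ x ∈ LinearMap.range s1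
      have : N'.mkQ x = 0 := (Submodule.Quotient.mk_eq_zero _).mpr hx
      rw [this]; exact zero_mem _
    let g₁ : (↥B₁) →ₗ[R] (θ j : Type v) := g.comp B₁.subtype
    have hg₁ : Function.Surjective g₁ := by
      intro y
      obtain ⟨x, hx⟩ := N'.mkQ_surjective (s1 y)
      have hxB : x ∈ B₁ := by
        show N'.mkQ x ∈ LinearMap.range s1
        rw [hx]
        exact ⟨y, rfl⟩
      refine ⟨⟨x, hxB⟩, ?_⟩
      show g x = y
      have h2 : gbar (N'.mkQ x) = g x := rfl
      rw [← h2, hx, hs1]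
    have hker₁ : LinearMap.ker g₁ = N'.comap B₁.subtype := by
      ext ⟨x, hx⟩
      constructor
      · intro h0
        have h0' : g x = 0 := h0
        obtain ⟨y, hy⟩ := hx
        have hy0 : y = 0 := by
          have h3 := hs1 y
          rw [hy] at h3
          have h4 : gbar (N'.mkQ x) = g x := rfl
          rw [h4, h0'] at h3
          exact h3.symm
        show x ∈ N'
        rw [← Submodule.Quotient.mk_eq_zero]
        show N'.mkQ x = 0
        rw [← hy, hy0, map_zero]
      · intro hmem
        show g x = 0
        exact hN'le hmem
    have hfilt₁ : Filt θ L (LinearMap.ker g₁) := by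
      rw [hker₁]
      exact filt_congr θ L ((Submodule.equivMapOfInjective (LinearMap.ker g).subtype
        (LinearMap.ker g).injective_subtype N).trans
        (Submodule.comapSubtypeEquivOfLe hN'B₁).symm) hN
    obtain ⟨s₂, hs₂⟩ := filt_split hext j L (fun a ha => hL a (List.mem_cons_of_mem _ ha))
      B₁ g₁ hg₁ hfilt₁
    refine ⟨B₁.subtype.comp s₂, ?_⟩
    rw [← LinearMap.comp_assoc]
    exact hs₂



theorem filt_main
    (hext : ∀ i j : Fin t, i ≤ j → ∀ (E : ModuleCat.{v} R) (f : θ i ⟶ E) (g : E ⟶ θ j)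
      (w : f ≫ g = 0), (CategoryTheory.ShortComplex.mk f g w).ShortExact →
      ∃ s : θ j ⟶ E, s ≫ g = 𝟙 (θ j)) :
    ∀ (L : List (Fin t)) (A : Type v) [AddCommGroup A] [Module R A]
      (_ : Filt θ L A) (i : Fin t) (_ : ∀ j ∈ L, i ≤ j),
      ∃ N : Submodule R A, Filt θ (L.filter (fun a => a ≠ i)) N ∧
        Nonempty ((A ⧸ N) ≃ₗ[R] (Fin (L.count i) → (θ i : Type v)))
  | [], A, _, _, hF, i, hmin => by
    haveI : Subsingleton A := hF
    haveI : Subsingleton (A ⧸ (⊥ : Submodule R A)) :=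
      ⟨fun a b => by
        obtain ⟨x, rfl⟩ := Submodule.mkQ_surjective _ a
        obtain ⟨y, rfl⟩ := Submodule.mkQ_surjective _ b
        rw [Subsingleton.elim x y]⟩
    refine ⟨⊥, ?_, ⟨?_⟩⟩
    · exact ⟨fun a b => Subtype.ext
        (by rw [(Submodule.mem_bot R).mp a.2, (Submodule.mem_bot R).mp b.2])⟩
    · haveI : Subsingleton (Fin (List.count i ([] : List (Fin t))) → (θ i : Type v)) :=
        ⟨fun a b => funext fun x => by
          rw [List.count_nil] at x
          exact x.elim0⟩
      exact subsingletonEquiv _ _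
  | j :: L', A, _, _, hF, i, hmin => by
    obtain ⟨K, hK, ⟨e⟩⟩ := hF
    obtain ⟨N', hN', ⟨q⟩⟩ :=
      filt_main hext L' K hK i (fun a ha => hmin a (List.mem_cons_of_mem _ ha))
    let N'' : Submodule R A := N'.map K.subtype
    have hN''K : N'' ≤ K := Submodule.map_subtype_le _ _
    have hcm : N''.comap K.subtype = N' :=
      Submodule.comap_map_eq_of_injective K.injective_subtype N'
    let π : (A ⧸ N'') →ₗ[R] (A ⧸ K) := Submodule.mapQ N'' K LinearMap.id hN''K
    let gbar : (A ⧸ N'') →ₗ[R] (θ j : Type v) := e.toLinearMap.comp π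
    have hπ : ∀ x : A, π (N''.mkQ x) = K.mkQ x := fun x => rfl
    have hgbar_surj : Function.Surjective gbar := by
      intro y
      obtain ⟨x, hx⟩ := K.mkQ_surjective (e.symm y)
      refine ⟨N''.mkQ x, ?_⟩
      show e (π (N''.mkQ x)) = y
      rw [hπ x, hx]
      exact e.apply_symm_apply y
    have hkerbar : LinearMap.ker gbar = K.map N''.mkQ := by
      ext z
      obtain ⟨x, rfl⟩ := N''.mkQ_surjective z
      constructor
      · intro hz
        have h1 : e (K.mkQ x) = 0 := by
          have : e (π (N''.mkQ x)) = 0 := hz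
          rwa [hπ x] at this
        have h2 : K.mkQ x = 0 := by
          rw [← map_zero e] at h1
          exact e.injective h1
        exact ⟨x, (Submodule.Quotient.mk_eq_zero _).mp h2, rfl⟩
      · rintro ⟨x', hx', hxx⟩
        show e (π (N''.mkQ x)) = 0
        rw [← hxx]
        show e (π (N''.mkQ x')) = 0
        have h0 : K.mkQ x' = 0 := (Submodule.Quotient.mk_eq_zero _).mpr hx'
        rw [hπ x', h0, map_zero]
    have hcnt' : ∀ a : Fin t, a ∈ List.replicate (L'.count i) i → a ≤ j := fun a ha =>
      (List.eq_of_mem_replicate ha) ▸ hmin j (List.mem_cons_self)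
    let εk : (Fin (L'.count i) → (θ i : Type v)) ≃ₗ[R] (LinearMap.ker gbar) :=
      q.symm.trans ((Submodule.quotEquivOfEq _ _ hcm.symm).trans
        ((subquotEquiv N'' K).trans (LinearEquiv.ofEq _ _ hkerbar.symm)))
    have hker_filt : Filt θ (List.replicate (L'.count i) i) (LinearMap.ker gbar) :=
      filt_congr θ _ εk (filt_replicate θ i (L'.count i))
    by_cases hji : j = i
    · subst hji
      obtain ⟨s, hs⟩ := filt_split θ hext j (List.replicate (L'.count j) j)
        hcnt' _ gbar hgbar_surj hker_filt
      refine ⟨N'', ?_, ⟨?_⟩⟩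
      · have hfil : (j :: L').filter (fun a => a ≠ j) = L'.filter (fun a => a ≠ j) := by
          simp
        rw [hfil]
        exact filt_congr θ _
          (Submodule.equivMapOfInjective K.subtype K.injective_subtype N') hN'
      · have hcnt : (j :: L').count j = L'.count j + 1 := List.count_cons_self
        rw [hcnt]
        exact (splitEquiv gbar s hs).trans
          ((εk.symm.prodCongr (LinearEquiv.refl R _)).trans piSnocEquiv)
    · obtain ⟨s, hs⟩ := filt_split θ hext j (List.replicate (L'.count i) i)
        hcnt' _ gbar hgbar_surj hker_filt
      let NN : Submodule R A := (LinearMap.range s).comap N''.mkQ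
      have hN''NN : N'' ≤ NN := by
        intro x hx
        show N''.mkQ x ∈ LinearMap.range s
        have h0 : N''.mkQ x = 0 := (Submodule.Quotient.mk_eq_zero _).mpr hx
        rw [h0]
        exact zero_mem _
      have hmap : NN.map N''.mkQ = LinearMap.range s := by
        rw [Submodule.map_comap_eq, Submodule.range_mkQ, top_inf_eq]
      have hsinj : Function.Injective s := by
        intro a b hab
        calc a = gbar (s a) := (LinearMap.congr_fun hs a).symm
          _ = gbar (s b) := by rw [hab]
          _ = b := LinearMap.congr_fun hs b
      refine ⟨NN, ?_, ⟨?_⟩⟩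
      · have hfil : (j :: L').filter (fun a => a ≠ i) = j :: L'.filter (fun a => a ≠ i) := by
          simp [hji]
        rw [hfil]
        refine ⟨N''.comap NN.subtype, ?_, ⟨?_⟩⟩
        · exact filt_congr θ _
            ((Submodule.equivMapOfInjective K.subtype K.injective_subtype N').trans
              (Submodule.comapSubtypeEquivOfLe hN''NN).symm) hN'
        · exact (subquotEquiv N'' NN).trans ((LinearEquiv.ofEq _ _ hmap).trans
            (LinearEquiv.ofInjective s hsinj).symm)
      · have hcnt : (j :: L').count i = L'.count i :=
          List.count_cons_of_ne hji
        rw [hcnt]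
        exact ((Submodule.quotientQuotientEquivQuotient N'' NN hN''NN).symm.trans
          ((Submodule.quotEquivOfEq _ _ hmap).trans
            ((quotRangeEquivKer gbar s hs).trans εk.symm)))



/-- type list of a filtration, head = top layer -/
def typList : ∀ {n : ℕ}, (Fin n → Fin t) → List (Fin t)
  | 0, _ => []
  | n + 1, f => f (Fin.last n) :: typList (f ∘ Fin.castSucc)

theorem count_typList : ∀ {n : ℕ} (f : Fin n → Fin t) (j : Fin t),
    (typList f).count j = (Finset.univ.filter (fun x => f x = j)).card
  | 0, f, j => by simp [typList]
  | n + 1, f, j => by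
    rw [typList, List.count_cons, count_typList (f ∘ Fin.castSucc) j,
      Finset.card_filter, Finset.card_filter, Fin.sum_univ_castSucc]
    by_cases h : f (Fin.last n) = j <;> simp [Function.comp, h]

theorem mem_typList : ∀ {n : ℕ} (f : Fin n → Fin t) (j : Fin t),
    j ∈ typList f → ∃ x, f x = j
  | 0, f, j, h => by simp [typList] at h
  | n + 1, f, j, h => by
    rw [typList, List.mem_cons] at h
    rcases h with h | h
    · exact ⟨Fin.last n, h.symm⟩
    · obtain ⟨x, hx⟩ := mem_typList (f ∘ Fin.castSucc) j h
      exact ⟨x.castSucc, hx⟩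

theorem filt_aux : ∀ (n : ℕ) (A : Type v) [AddCommGroup A] [Module R A]
    (c : Fin (n + 1) → Submodule R A) (_ : c 0 = ⊥) (_ : c (Fin.last n) = ⊤)
    (_ : ∀ i : Fin n, c i.castSucc ≤ c i.succ) (typ : Fin n → Fin t)
    (_ : ∀ i : Fin n,
      Nonempty (((c i.succ : Submodule R A) ⧸ ((c i.castSucc).comap (c i.succ).subtype))
        ≃ₗ[R] (θ (typ i)))), Filt θ (typList typ) A
  | 0, A, _, _, c, hbot, htop, hmono, typ, hiso => by
    show Subsingleton A
    have h : (⊥ : Submodule R A) = ⊤ := by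
      rw [← hbot, ← htop]
      rfl
    exact ⟨fun a b => by
      have ha : a ∈ (⊥ : Submodule R A) := h.symm ▸ Submodule.mem_top
      have hb : b ∈ (⊥ : Submodule R A) := h.symm ▸ Submodule.mem_top
      rw [(Submodule.mem_bot R).mp ha, (Submodule.mem_bot R).mp hb]⟩
  | n + 1, A, _, _, c, hbot, htop, hmono, typ, hiso => by
    have hmono' : Monotone c := Fin.monotone_iff_le_succ.mpr hmono
    refine ⟨c (Fin.last n).castSucc, ?_, ?_⟩
    · -- restricted filtration on K
      refine filt_aux n _ (fun k => (c k.castSucc).comap (c (Fin.last n).castSucc).subtype)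
        ?_ ?_ ?_ (typ ∘ Fin.castSucc) ?_
      · beta_reduce
        rw [Fin.castSucc_zero, hbot, Submodule.comap_bot, Submodule.ker_subtype]
      · beta_reduce
        exact Submodule.comap_subtype_self _
      · intro k
        beta_reduce
        apply Submodule.comap_mono
        rw [← Fin.succ_castSucc]
        exact hmono k.castSucc
      · intro k
        beta_reduce
        have hle : c (k.castSucc).succ ≤ c (Fin.last n).castSucc :=
          hmono' (by rw [Fin.succ_castSucc]; exact Fin.castSucc_le_castSucc_iff.mpr (Fin.le_last _))
        obtain ⟨w⟩ := hiso k.castSucc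
        rw [← Fin.succ_castSucc]
        exact ⟨(doubleComapEquiv _ _ _ hle).trans w⟩
    · -- top quotient
      obtain ⟨w⟩ := hiso (Fin.last n)
      have h1 : c (Fin.last n).succ = ⊤ := by rw [Fin.succ_last]; exact htop
      rw [h1] at w
      exact ⟨(topQuotEquiv _).symm.trans w⟩

theorem filt_of_filtration (M : ModuleCat.{v} R) (F : Filtration R θ M) :
    Filt θ (typList F.typ) (↥M) :=
  filt_aux θ F.n (↥M) F.c F.bot F.top F.mono F.typ F.iso

theorem filtration_of_filt : ∀ (L : List (Fin t)) (A : Type v) [AddCommGroup A] [Module R A]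
    (_ : Filt θ L A), Nonempty (Filtration R θ (ModuleCat.of R A))
  | [], A, _, _, hF =>
    ⟨{ n := 0
       c := fun _ => ⊥
       bot := rfl
       top := by
         haveI : Subsingleton A := hF
         ext x
         simp only [Submodule.mem_bot, Submodule.mem_top, iff_true]
         exact Subsingleton.elim (show A from x) 0
       mono := fun i => i.elim0
       typ := fun i => i.elim0
       iso := fun i => i.elim0 }⟩
  | j :: L, A, _, _, hF => by
    obtain ⟨N, hN, ⟨e⟩⟩ := hF
    obtain ⟨G⟩ := filtration_of_filt L N hN
    refine
      ⟨{ n := G.n + 1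
         c := Fin.snoc (fun k => (G.c k).map N.subtype) ⊤
         bot := ?_
         top := ?_
         mono := ?_
         typ := Fin.snoc G.typ j
         iso := ?_ }⟩
    · have h0 : ((0 : Fin (G.n + 2))) = Fin.castSucc 0 := rfl
      rw [h0, Fin.snoc_castSucc, G.bot, Submodule.map_bot]
    · rw [Fin.snoc_last]
    · intro k
      cases k using Fin.lastCases with
      | last =>
        rw [Fin.succ_last, Fin.snoc_last]
        exact le_top
      | cast k =>
        rw [Fin.succ_castSucc, Fin.snoc_castSucc, Fin.snoc_castSucc]
        exact Submodule.map_mono (G.mono k)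
    · intro k
      cases k using Fin.lastCases with
      | last =>
        rw [Fin.succ_last, Fin.snoc_last, Fin.snoc_castSucc, G.top, Submodule.map_top,
          Submodule.range_subtype, Fin.snoc_last]
        exact ⟨(topQuotEquiv _).trans e⟩
      | cast k =>
        rw [Fin.succ_castSucc, Fin.snoc_castSucc, Fin.snoc_castSucc, Fin.snoc_castSucc]
        obtain ⟨w⟩ := G.iso k
        have hle : (G.c k.succ).map N.subtype ≤ N := Submodule.map_subtype_le _ _
        have h1 : ((G.c k.succ).map N.subtype).comap N.subtype = G.c k.succ :=
          Submodule.comap_map_eq_of_injective N.injective_subtype _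
        have h2 : ((G.c k.castSucc).map N.subtype).comap N.subtype = G.c k.castSucc :=
          Submodule.comap_map_eq_of_injective N.injective_subtype _
        have E1 := doubleComapEquiv N ((G.c k.succ).map N.subtype)
          ((G.c k.castSucc).map N.subtype) hle
        rw [h1, h2] at E1
        exact ⟨E1.symm.trans w⟩



theorem mult_eq_count {t : ℕ} (θ : Fin t → ModuleCat R) (M : ModuleCat.{v} R)
    (h : Nonempty (Filtration R θ M)) (j : Fin t) :
    mult R θ M j = (typList h.some.typ).count j := by
  rw [mult, dif_pos h, count_typList]


end ESAux

theorem stmt19 (k R : Type) [Field k] [IsAlgClosed k] [Ring R] [Algebra k R]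
    [FiniteDimensional k R] {t : ℕ} (S : StratSys R t)
    (M : ModuleCat R) [Module.Finite R M] (hM : InFilt R S.θ M)
    (hM0 : ¬ CategoryTheory.Limits.IsZero M) (i : Fin t)
    (hi : mult R S.θ M i ≠ 0) (hmin : ∀ j : Fin t, mult R S.θ M j ≠ 0 → i ≤ j) :
    ∃ N : ModuleCat R, Module.Finite R N ∧ InFilt R S.θ N ∧
      (∀ j : Fin t, mult R S.θ N j ≠ 0 → i < j) ∧
      ∃ (f : N ⟶ M) (g : M ⟶ ⨁ fun _ : Fin (mult R S.θ M i) => S.θ i) (w : f ≫ g = 0),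
        (CategoryTheory.ShortComplex.mk f g w).ShortExact := by
  haveI hkR : IsNoetherian k R := IsNoetherian.iff_fg.mpr inferInstance
  haveI hRR : IsNoetherianRing R := isNoetherian_of_tower k hkR
  haveI hNM : IsNoetherian R (↥M) := isNoetherian_of_isNoetherianRing_of_finite R (↥M)
  have hFne : Nonempty (Filtration R S.θ M) := hM
  have hmult : ∀ j, mult R S.θ M j = (typList hFne.some.typ).count j :=
    mult_eq_count S.θ M hFne
  have hFiltM : Filt S.θ (typList hFne.some.typ) (↥M) := filt_of_filtration S.θ M hFne.some
  have hminL : ∀ j ∈ typList hFne.some.typ, i ≤ j := by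
    intro j hj
    apply hmin
    rw [hmult j]
    exact Nat.pos_iff_ne_zero.mp (List.count_pos_iff.mpr hj)
  obtain ⟨N₀, hN₀, ⟨E⟩⟩ :=
    filt_main S.θ S.extZero (typList hFne.some.typ) (↥M) hFiltM i hminL
  have hmc : (typList hFne.some.typ).count i = mult R S.θ M i := (hmult i).symm
  let E2 : ((↥M) ⧸ N₀) ≃ₗ[R] (Fin (mult R S.θ M i) → ↥(S.θ i)) :=
    E.trans (LinearEquiv.piCongrLeft R (fun _ : Fin (mult R S.θ M i) => ↥(S.θ i))
      (finCongr hmc))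
  have hNfg : Module.Finite R (↥N₀) := Module.Finite.iff_fg.mpr (IsNoetherian.noetherian N₀)
  have hNfilt : Nonempty (Filtration R S.θ (ModuleCat.of R ↥N₀)) :=
    filtration_of_filt S.θ _ (↥N₀) hN₀
  refine ⟨ModuleCat.of R ↥N₀, hNfg, hNfilt, ?_, ?_⟩
  · intro j hj
    by_contra hji
    push_neg at hji
    rw [mult_eq_count S.θ _ hNfilt j] at hj
    have hjL : j ∈ typList hNfilt.some.typ := List.count_pos_iff.mp (Nat.pos_of_ne_zero hj)
    have hTne : (typList hNfilt.some.typ).toFinset.Nonempty := ⟨j, List.mem_toFinset.mpr hjL⟩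
    set i₀ := Finset.min' _ hTne with hi₀
    have hi₀mem : i₀ ∈ typList hNfilt.some.typ := List.mem_toFinset.mp (Finset.min'_mem _ hTne)
    have hi₀min : ∀ a ∈ typList hNfilt.some.typ, i₀ ≤ a := fun a ha =>
      Finset.min'_le _ a (List.mem_toFinset.mpr ha)
    have hFiltN : Filt S.θ (typList hNfilt.some.typ) (↥(ModuleCat.of R ↥N₀)) :=
      filt_of_filtration S.θ _ hNfilt.some
    obtain ⟨NN, _, ⟨E'⟩⟩ := filt_main S.θ S.extZero _ _ hFiltN i₀ hi₀min
    have hc0 : 0 < (typList hNfilt.some.typ).count i₀ := List.count_pos_iff.mpr hi₀mem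
    let pr : (Fin ((typList hNfilt.some.typ).count i₀) → ↥(S.θ i₀)) →ₗ[R] ↥(S.θ i₀) :=
      LinearMap.proj ⟨0, hc0⟩
    let φ : (↥N₀) →ₗ[R] ↥(S.θ i₀) := pr.comp (E'.toLinearMap.comp NN.mkQ)
    have hφs : Function.Surjective φ := by
      intro y
      obtain ⟨z, hz⟩ := NN.mkQ_surjective (E'.symm (fun _ => y))
      refine ⟨z, ?_⟩
      show pr (E' (NN.mkQ z)) = y
      rw [hz, E'.apply_symm_apply]
      rfl
    have hhz : ∀ a ∈ (typList hFne.some.typ).filter (fun b => b ≠ i),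
        ∀ ψ : ↥(S.θ a) →ₗ[R] ↥(S.θ i₀), ψ = 0 := by
      intro a ha ψ
      rw [List.mem_filter] at ha
      have ha1 : i ≤ a := hminL a ha.1
      have ha2 : a ≠ i := by simpa using ha.2
      have hlt : i₀ < a :=
        lt_of_le_of_lt (le_trans (hi₀min j hjL) hji) (lt_of_le_of_ne ha1 (Ne.symm ha2))
      have := congrArg ModuleCat.Hom.hom (S.homZero i₀ a hlt (ModuleCat.ofHom ψ))
      simpa using this
    have hφ0 : φ = 0 := filt_homZero S.θ _ hhz hN₀ φ
    have hns : ¬ Subsingleton (↥(S.θ i₀)) := by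
      intro hsub
      exact (S.indec i₀).1 (ModuleCat.isZero_of_subsingleton _)
    haveI : Nontrivial (↥(S.θ i₀)) := not_subsingleton_iff_nontrivial.mp hns
    obtain ⟨y, hy⟩ := exists_ne (0 : ↥(S.θ i₀))
    obtain ⟨x, hx⟩ := hφs y
    rw [hφ0] at hx
    simp at hx
    exact hy hx.symm
  · let β := (ModuleCat.biproductIsoPi (fun _ : Fin (mult R S.θ M i) => S.θ i)).symm
    let g' : (↥M) →ₗ[R] (Fin (mult R S.θ M i) → ↥(S.θ i)) := E2.toLinearMap.comp N₀.mkQ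
    have hg's : Function.Surjective g' := E2.surjective.comp N₀.mkQ_surjective
    let fc : ModuleCat.of R (↥N₀) ⟶ M := ModuleCat.ofHom N₀.subtype
    let gc' : M ⟶ ModuleCat.of R (Fin (mult R S.θ M i) → ↥(S.θ i)) := ModuleCat.ofHom g'
    let gc : M ⟶ ⨁ fun _ : Fin (mult R S.θ M i) => S.θ i := gc' ≫ β.hom
    have hβinj : Function.Injective β.hom := (ModuleCat.mono_iff_injective β.hom).mp inferInstance
    have hfg' : fc ≫ gc' = 0 := by
      ext x : 2
      show E2 (N₀.mkQ ((N₀.subtype : (↥N₀) →ₗ[R] ↥M) x)) = 0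
      have h1 : N₀.mkQ ((N₀.subtype : (↥N₀) →ₗ[R] ↥M) x) = 0 :=
        (Submodule.Quotient.mk_eq_zero _).mpr x.2
      rw [h1, map_zero]
    have w : fc ≫ gc = 0 := by
      show fc ≫ gc' ≫ β.hom = 0
      rw [← Category.assoc, hfg', zero_comp]
    refine ⟨fc, gc, w, ?_⟩
    refine
      { exact := ?_
        mono_f := (ModuleCat.mono_iff_injective fc).mpr N₀.injective_subtype
        epi_g := (ModuleCat.epi_iff_surjective gc).mpr ?_ }
    · rw [CategoryTheory.ShortComplex.moduleCat_exact_iff]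
      intro x₂ hx₂
      have h1 : β.hom (gc' x₂) = 0 := by
        have h0 : (gc' ≫ β.hom) x₂ = 0 := hx₂
        exact h0
      have h2 : gc' x₂ = 0 := by
        apply hβinj
        rw [h1, map_zero]
      have h3 : N₀.mkQ x₂ = 0 := by
        apply E2.injective
        rw [map_zero]
        exact h2
      have h4 : x₂ ∈ N₀ := (Submodule.Quotient.mk_eq_zero _).mp h3
      exact ⟨⟨x₂, h4⟩, rfl⟩
    · intro z
      obtain ⟨x, hx⟩ := hg's (β.inv z)
      refine ⟨x, ?_⟩
      have h2 : β.inv ≫ β.hom = 𝟙 _ := β.inv_hom_id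
      replace h2 := congrArg ModuleCat.Hom.hom h2
      have h3 := LinearMap.congr_fun h2 z
      show (gc' ≫ β.hom) x = z
      show β.hom (g' x) = z
      rw [hx]
      exact h3

end ITPaper
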